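/- For the function π_d(a,b,c) = a³ - a·d + b·c on ℂ³ with the standard Hermitian metric, and for any bounded ball B ⊂ ℂ³, there is a constant ν > 0, independent of d, such that for all (a,b,c) ∈ B and all d in a bounded set: ‖∇π_d‖² ≥ ν^{-1}·|d|^{1/2}·min(|π_d - ζ_d^+|, |π_d - ζ_d^-|), where ζ_d^± are the two critical values of π_d and ‖∇π_d‖² = 4|b|² + 4|c|² + |3a² - d|². -/

import Mathlib

set_option maxHeartbeats 800000 in
private lemma aux_grad (R : ℝ) (hR : 0 < R) (a b c d s : ℂ)
    (hd : ‖d‖ ≤ R) (hs : s ^ 2 = d / 3)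
    (h : ‖a - s‖ ≤ ‖a + s‖) :
    (1 + Real.sqrt R)⁻¹ * Real.sqrt (‖d‖) *
      ‖(a ^ 3 - a * d + b * c) - (s ^ 3 - s * d)‖
      ≤ 4 * ‖b‖ ^ 2 + 4 * ‖c‖ ^ 2 +
          ‖3 * a ^ 2 - d‖ ^ 2 := by
  have hd3 : d = 3 * s ^ 2 := by rw [hs]; field_simp
  set x := ‖a - s‖ with hx
  set y := ‖a + s‖ with hy
  set m := ‖s‖ with hm
  set B := ‖b‖ with hB
  set C := ‖c‖ with hC
  set t := Real.sqrt (‖d‖) with ht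
  have hx0 : 0 ≤ x := norm_nonneg _
  have hy0 : 0 ≤ y := norm_nonneg _
  have hm0 : 0 ≤ m := norm_nonneg _
  have hB0 : 0 ≤ B := norm_nonneg _
  have hC0 : 0 ≤ C := norm_nonneg _
  have ht0 : 0 ≤ t := Real.sqrt_nonneg _
  -- t² = 3 m²
  have habsd : ‖d‖ = 3 * m ^ 2 := by
    rw [hd3, norm_mul, norm_pow]
    norm_num [hm]
  have ht2 : t ^ 2 = 3 * m ^ 2 := by
    rw [ht, Real.sq_sqrt (norm_nonneg d), habsd]
  -- m ≤ y  (parallelogram law + h)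
  have hmy : m ≤ y := by
    have hp := parallelogram_law_with_norm ℝ a s
    nlinarith [norm_nonneg a, h.trans_eq hy.symm, hx, hy, hm,
      sq_nonneg (‖a‖ : ℝ)]
  -- t ≤ 2 y
  have hty : t ≤ 2 * y := by nlinarith
  -- t ≤ √R
  have htR : t ≤ Real.sqrt R := Real.sqrt_le_sqrt hd
  -- u := ν⁻¹ with 0 ≤ u and u * t ≤ 1
  set u := (1 + Real.sqrt R)⁻¹ with hu
  have hR1 : (0:ℝ) < 1 + Real.sqrt R := by positivity
  have hu0 : 0 ≤ u := by positivity
  have hut : u * t ≤ 1 := by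
    rw [hu]
    rw [inv_mul_le_iff₀ hR1]
    nlinarith [Real.sqrt_nonneg R]
  -- z := |a + 2s| ≤ 2 y
  set z := ‖a + 2 * s‖ with hz
  have hz0 : 0 ≤ z := norm_nonneg _
  have hz2y : z ≤ 2 * y := by
    have : a + 2 * s = (a + s) + s := by ring
    calc z = ‖(a + s) + s‖ := by rw [hz, this]
      _ ≤ y + m := norm_add_le _ _
      _ ≤ 2 * y := by linarith
  -- factorization bound
  have hfac : (a ^ 3 - a * d + b * c) - (s ^ 3 - s * d)
      = (a - s) ^ 2 * (a + 2 * s) + b * c := by rw [hd3]; ring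
  have hP : ‖(a ^ 3 - a * d + b * c) - (s ^ 3 - s * d)‖
      ≤ x ^ 2 * z + B * C := by
    rw [hfac]
    calc ‖(a - s) ^ 2 * (a + 2 * s) + b * c‖
        ≤ ‖(a - s) ^ 2 * (a + 2 * s)‖ + ‖b * c‖ :=
          norm_add_le _ _
      _ = x ^ 2 * z + B * C := by
          rw [norm_mul, norm_pow, norm_mul]
  -- |3a² - d| = 3 x y
  have h3 : ‖3 * a ^ 2 - d‖ = 3 * (x * y) := by
    have : 3 * a ^ 2 - d = 3 * ((a - s) * (a + s)) := by rw [hd3]; ring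
    rw [this, norm_mul, norm_mul]
    norm_num [hx, hy]
  rw [h3]
  have step1 : u * t * ‖(a ^ 3 - a * d + b * c) - (s ^ 3 - s * d)‖
      ≤ u * t * (x ^ 2 * z + B * C) := by
    apply mul_le_mul_of_nonneg_left hP (by positivity)
  refine step1.trans ?_
  have hu1 : u ≤ 1 := by
    rw [hu]
    exact inv_le_one_of_one_le₀ (by nlinarith [Real.sqrt_nonneg R])
  have hA : u * t * (x ^ 2 * z) ≤ u * t * (x ^ 2 * (2 * y)) :=
    mul_le_mul_of_nonneg_left (mul_le_mul_of_nonneg_left hz2y (sq_nonneg x))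
      (mul_nonneg hu0 ht0)
  have hB2 : u * (t * (x ^ 2 * y)) ≤ 1 * (t * (x ^ 2 * y)) :=
    mul_le_mul_of_nonneg_right hu1 (by positivity)
  have hC2 : t * (x ^ 2 * y) ≤ 2 * y * (x ^ 2 * y) :=
    mul_le_mul_of_nonneg_right hty (by positivity)
  have hD : u * t * (B * C) ≤ 1 * (B * C) :=
    mul_le_mul_of_nonneg_right hut (by positivity)
  nlinarith [sq_nonneg (B - C), hA, hB2, hC2, hD]

/-- Gradient estimate for `π_d(a,b,c) = a³ - a·d + b·c` on `ℂ³` with the standard metric: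
for any bounded ball (of radius `R`) there is a constant `ν > 0`, independent of `d`
(for `d` in a bounded set), such that
`‖∇π_d‖² ≥ ν⁻¹ · |d|^{1/2} · min(|π_d - ζ_d^+|, |π_d - ζ_d^-|)`,
where `ζ_d^± = ±(s³ - s·d)` (for `s² = d/3`) are the two critical values of `π_d`,
and `‖∇π_d‖² = 4|b|² + 4|c|² + |3a² - d|²`. -/
theorem gradient_estimate_A2 (R : ℝ) (hR : 0 < R) :
    ∃ ν : ℝ, 0 < ν ∧ ∀ a b c d s : ℂ,
      ‖a‖ ≤ R → ‖b‖ ≤ R → ‖c‖ ≤ R → ‖d‖ ≤ R →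
      s ^ 2 = d / 3 →
      ν⁻¹ * Real.sqrt (‖d‖) *
          min (‖(a ^ 3 - a * d + b * c) - (s ^ 3 - s * d)‖)
              (‖(a ^ 3 - a * d + b * c) + (s ^ 3 - s * d)‖)
        ≤ 4 * ‖b‖ ^ 2 + 4 * ‖c‖ ^ 2 +
            ‖3 * a ^ 2 - d‖ ^ 2 := by
  refine ⟨1 + Real.sqrt R, by positivity, fun a b c d s _ _ _ hd hs => ?_⟩
  have hnn : 0 ≤ (1 + Real.sqrt R)⁻¹ * Real.sqrt (‖d‖) := by positivity
  rcases le_total (‖a - s‖) (‖a + s‖) with h | h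
  · calc (1 + Real.sqrt R)⁻¹ * Real.sqrt (‖d‖) *
          min (‖(a ^ 3 - a * d + b * c) - (s ^ 3 - s * d)‖)
              (‖(a ^ 3 - a * d + b * c) + (s ^ 3 - s * d)‖)
        ≤ (1 + Real.sqrt R)⁻¹ * Real.sqrt (‖d‖) *
            ‖(a ^ 3 - a * d + b * c) - (s ^ 3 - s * d)‖ :=
          mul_le_mul_of_nonneg_left (min_le_left _ _) hnn
      _ ≤ _ := aux_grad R hR a b c d s hd hs h
  · have hs' : (-s) ^ 2 = d / 3 := by rw [← hs]; ring
    have h' : ‖a - (-s)‖ ≤ ‖a + (-s)‖ := by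
      rw [sub_neg_eq_add, ← sub_eq_add_neg]; exact h
    have key := aux_grad R hR a b c d (-s) hd hs' h'
    have heq : (a ^ 3 - a * d + b * c) - ((-s) ^ 3 - (-s) * d)
        = (a ^ 3 - a * d + b * c) + (s ^ 3 - s * d) := by ring
    rw [heq] at key
    calc (1 + Real.sqrt R)⁻¹ * Real.sqrt (‖d‖) *
          min (‖(a ^ 3 - a * d + b * c) - (s ^ 3 - s * d)‖)
              (‖(a ^ 3 - a * d + b * c) + (s ^ 3 - s * d)‖)
        ≤ (1 + Real.sqrt R)⁻¹ * Real.sqrt (‖d‖) *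
            ‖(a ^ 3 - a * d + b * c) + (s ^ 3 - s * d)‖ :=
          mul_le_mul_of_nonneg_left (min_le_right _ _) hnn
      _ ≤ _ := key
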